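/- Let R be a commutative ring, S a multiplicative subset, and M a nonzero S-Noetherian R-module such that every element of S is a non-zero-divisor on M. Then M has an associated prime, i.e., there exists a nonzero m ∈ M such that Ann_R(m) is a prime ideal. -/

import Mathlib

section Aux

variable {R : Type*} [CommRing R] (S : Set R)

/-- The S-Noetherian property, as stated in the theorem. -/
def SNoeth (M : Type*) [AddCommGroup M] [Module R M] : Prop :=
  ∀ N : Submodule R M, ∃ s ∈ S, ∃ F : Submodule R M,
      F.FG ∧ F ≤ N ∧ ∀ n ∈ N, s • n ∈ F

variable {M M' : Type*} [AddCommGroup M] [Module R M] [AddCommGroup M'] [Module R M']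

theorem SNoeth.congr (h : SNoeth S M) (e : M ≃ₗ[R] M') : SNoeth S M' := by
  intro N
  obtain ⟨s, hs, F, hFfg, hFle, hF⟩ := h (N.comap (e : M →ₗ[R] M'))
  refine ⟨s, hs, F.map (e : M →ₗ[R] M'), hFfg.map _, ?_, ?_⟩
  · rintro x hx
    obtain ⟨y, hy, rfl⟩ := hx
    exact hFle hy
  · intro n hn
    have : e.symm n ∈ N.comap (e : M →ₗ[R] M') := by
      simpa using hn
    have h2 := hF _ this
    refine ⟨s • e.symm n, h2, ?_⟩
    simp

theorem SNoeth.prod (h : SNoeth S M) (h' : SNoeth S M')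
    (hSmul : ∀ a ∈ S, ∀ b ∈ S, a * b ∈ S) : SNoeth S (M × M') := by
  intro N
  obtain ⟨s₁, hs₁, F₁, hF₁fg, hF₁le, hF₁⟩ := h (N.map (LinearMap.fst R M M'))
  obtain ⟨s₂, hs₂, F₂, hF₂fg, hF₂le, hF₂⟩ := h' (N.comap (LinearMap.inr R M M'))
  obtain ⟨T, hT⟩ := hF₁fg
  -- lift each generator of F₁ to an element of N
  have hTlift : ∀ y ∈ (T : Set M), ∃ z : M', (y, z) ∈ N := by
    intro y hy
    have : y ∈ N.map (LinearMap.fst R M M') := hF₁le (hT ▸ Submodule.subset_span hy)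
    obtain ⟨p, hp, hpy⟩ := this
    exact ⟨p.2, by simpa [← hpy] using hp⟩
  choose z hz using hTlift
  classical
  let G : Submodule R (M × M') :=
    Submodule.span R ((fun y : {y // y ∈ (T : Set M)} => ((y : M), z y y.2)) '' Set.univ)
      ⊔ F₂.map (LinearMap.inr R M M')
  refine ⟨s₂ * s₁, hSmul _ hs₂ _ hs₁, G, ?_, ?_, ?_⟩
  · refine Submodule.FG.sup ?_ (hF₂fg.map _)
    exact Submodule.fg_span ((Set.finite_univ (α := {y // y ∈ (T : Set M)})).image _)
  · refine sup_le ?_ ?_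
    · rw [Submodule.span_le]
      rintro _ ⟨y, -, rfl⟩
      exact hz y y.2
    · rintro _ ⟨x, hx, rfl⟩
      exact hF₂le hx
  · rintro ⟨a, b⟩ hab
    have ha : s₁ • a ∈ F₁ := hF₁ a ⟨(a, b), hab, rfl⟩
    -- write s₁ • a as a combination of the generators
    have ha' : s₁ • a ∈ Submodule.span R
        ((LinearMap.fst R M M') '' ((fun y : {y // y ∈ (T : Set M)} => ((y : M), z y y.2)) '' Set.univ)) := by
      rw [← hT] at ha
      convert ha using 2
      ext w
      constructor
      · rintro ⟨_, ⟨y, -, rfl⟩, rfl⟩; exact y.2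
      · intro hw; exact ⟨_, ⟨⟨w, hw⟩, Set.mem_univ _, rfl⟩, rfl⟩
    rw [← Submodule.map_span] at ha'
    obtain ⟨p, hp, hpa⟩ := ha'
    -- p ∈ span of lifted generators, p.1 = s₁ • a
    have hpN : p ∈ N := by
      have : Submodule.span R ((fun y : {y // y ∈ (T : Set M)} => ((y : M), z y y.2)) '' Set.univ) ≤ N := by
        rw [Submodule.span_le]; rintro _ ⟨y, -, rfl⟩; exact hz y y.2
      exact this hp
    have hdiff : s₁ • (a, b) - p ∈ N := sub_mem (Submodule.smul_mem _ _ hab) hpN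
    have hpa' : p.1 = s₁ • a := hpa
    have hdiff1 : (s₁ • (a, b) - p).1 = 0 := by
      simp [hpa']
    -- so the difference lies in the second factor part of N
    have hsecond : ((0 : M), (s₁ • (a, b) - p).2) ∈ N := by
      have : (s₁ • (a, b) - p) = ((s₁ • (a, b) - p).1, (s₁ • (a, b) - p).2) := rfl
      rw [hdiff1] at this
      rwa [← this]
    have h2 : s₂ • (s₁ • (a, b) - p).2 ∈ F₂ := hF₂ _ hsecond
    have key : (s₂ * s₁) • (a, b) = s₂ • p + (0, s₂ • (s₁ • (a, b) - p).2) := by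
      rw [mul_smul]
      ext
      · simp [hpa']
      · simp [smul_sub]
    rw [key]
    refine add_mem (Submodule.mem_sup_left (Submodule.smul_mem _ _ hp)) ?_
    exact Submodule.mem_sup_right ⟨s₂ • (s₁ • (a, b) - p).2, h2, rfl⟩

/-- a helper equivalence -/
def finSuccPiEquiv (n : ℕ) : (Fin (n + 1) → M) ≃ₗ[R] M × (Fin n → M) where
  toFun f := (f 0, fun i => f i.succ)
  invFun p := Fin.cons p.1 p.2
  map_add' f g := rfl
  map_smul' c f := rfl
  left_inv f := Fin.cons_self_tail f
  right_inv p := by simp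

theorem SNoeth.pi (h : SNoeth S M) (hS1 : (1 : R) ∈ S)
    (hSmul : ∀ a ∈ S, ∀ b ∈ S, a * b ∈ S) (n : ℕ) : SNoeth S (Fin n → M) := by
  induction n with
  | zero =>
    intro N
    refine ⟨1, hS1, ⊥, Submodule.fg_bot, bot_le, ?_⟩
    intro x hx
    have : x = 0 := Subsingleton.elim _ _
    simp [this]
  | succ n ih =>
    exact ((h.prod S ih hSmul).congr S (finSuccPiEquiv n).symm)

/-- Key lemma: every ideal is S-finite modulo the annihilator of M. -/
theorem key_ideal (hS1 : (1 : R) ∈ S) (hSmul : ∀ a ∈ S, ∀ b ∈ S, a * b ∈ S)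
    (hSN : SNoeth S M) (hreg : ∀ s ∈ S, ∀ m : M, s • m = 0 → m = 0) (I : Ideal R) :
    ∃ s ∈ S, ∃ J : Ideal R, J.FG ∧ J ≤ I ∧
      ∀ r ∈ I, ∃ j ∈ J, ∀ m : M, (s * r - j) • m = 0 := by
  classical
  obtain ⟨s₀, hs₀, F, hFfg, -, hF⟩ := hSN ⊤
  obtain ⟨T, hT⟩ := hFfg
  -- work in the module (Fin T.card → M) via the generators of F
  obtain ⟨x, hxT, hTx⟩ : ∃ x : Fin T.card → M, (∀ i, x i ∈ (T : Set M)) ∧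
      (T : Set M) ⊆ Set.range x := by
    refine ⟨fun i => T.equivFin.symm i, fun i => (T.equivFin.symm i).2, ?_⟩
    intro w hw
    exact ⟨T.equivFin ⟨w, hw⟩, by simp⟩
  let φ : R →ₗ[R] (Fin T.card → M) := LinearMap.pi fun i => LinearMap.toSpanSingleton R M (x i)
  obtain ⟨s, hs, G, hGfg, hGle, hG⟩ := hSN.pi S hS1 hSmul T.card (Submodule.map φ I)
  obtain ⟨U, hU⟩ := hGfg
  have hUmem : ∀ u ∈ (U : Set (Fin T.card → M)), ∃ r ∈ I, φ r = u := by
    intro u hu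
    have : u ∈ Submodule.map φ I := hGle (hU ▸ Submodule.subset_span hu)
    obtain ⟨r, hr, hru⟩ := this
    exact ⟨r, hr, hru⟩
  choose ρ hρI hρφ using hUmem
  let J : Ideal R := Ideal.span ((fun u : {u // u ∈ (U : Set (Fin T.card → M))} => ρ u u.2) '' Set.univ)
  refine ⟨s, hs, J, ?_, ?_, ?_⟩
  · exact Submodule.fg_span ((Set.finite_univ.image _))
  · rw [Ideal.span_le]
    rintro _ ⟨u, -, rfl⟩
    exact hρI u u.2
  · intro r hr
    have hφr : φ (s * r) ∈ Submodule.map φ J := by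
      have h1 : s • φ r ∈ G := hG _ (Submodule.mem_map_of_mem hr)
      have h2 : Submodule.map φ J = G := by
        rw [← hU]
        show Submodule.map φ (Ideal.span _) = _
        rw [Ideal.span, Submodule.map_span]
        congr 1
        ext w
        constructor
        · rintro ⟨_, ⟨u, -, rfl⟩, rfl⟩
          rw [hρφ u u.2]; exact u.2
        · intro hw
          exact ⟨_, ⟨⟨w, hw⟩, Set.mem_univ _, rfl⟩, hρφ w hw⟩
      rw [h2]
      have : φ (s * r) = s • φ r := by rw [← smul_eq_mul, map_smul]
      rw [this]
      exact h1
    obtain ⟨j, hj, hjφ⟩ := hφr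
    refine ⟨j, hj, ?_⟩
    -- s * r - j annihilates every x i, hence F, hence M by regularity of s₀
    have hxi : ∀ i, (s * r - j) • x i = 0 := by
      intro i
      have := congrFun hjφ i
      simp only [φ, LinearMap.pi_apply, LinearMap.toSpanSingleton_apply] at this
      rw [sub_smul, this, sub_self]
    have hann : ∀ w ∈ F, (s * r - j) • w = 0 := by
      intro w hw
      have hle : F ≤ LinearMap.ker (LinearMap.lsmul R M (s * r - j)) := by
        rw [← hT, Submodule.span_le]
        intro y hy
        obtain ⟨i, rfl⟩ := hTx hy
        rw [SetLike.mem_coe, LinearMap.mem_ker, LinearMap.lsmul_apply]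
        exact hxi i
      have := hle hw
      rwa [LinearMap.mem_ker, LinearMap.lsmul_apply] at this
    intro m
    have h1 : (s * r - j) • (s₀ • m) = 0 := hann _ (hF m trivial)
    rw [smul_comm] at h1
    exact hreg s₀ hs₀ _ h1

end Aux

theorem comm_S_noetherian_associated_prime {R : Type*} [CommRing R] (S : Set R)
    (hS1 : (1 : R) ∈ S) (hSmul : ∀ a ∈ S, ∀ b ∈ S, a * b ∈ S)
    {M : Type*} [AddCommGroup M] [Module R M]
    (hM : ∃ x : M, x ≠ 0)
    (hSN : ∀ N : Submodule R M, ∃ s ∈ S, ∃ F : Submodule R M,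
      F.FG ∧ F ≤ N ∧ ∀ n ∈ N, s • n ∈ F)
    (hreg : ∀ s ∈ S, ∀ m : M, s • m = 0 → m = 0) :
    ∃ m : M, m ≠ 0 ∧ Ideal.IsPrime (LinearMap.ker (LinearMap.toSpanSingleton R M m)) := by
  classical
  set ann : M → Ideal R := fun m => LinearMap.ker (LinearMap.toSpanSingleton R M m) with hann
  have mem_ann : ∀ (m : M) (r : R), r ∈ ann m ↔ r • m = 0 := by
    intro m r
    simp [hann, LinearMap.mem_ker]
  set 𝒜 : Set (Ideal R) := {I | ∃ m : M, m ≠ 0 ∧ I = ann m} with h𝒜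
  obtain ⟨x₀, hx₀⟩ := hM
  have hx𝒜 : ann x₀ ∈ 𝒜 := ⟨x₀, hx₀, rfl⟩
  -- Zorn's lemma: every chain in 𝒜 has an upper bound in 𝒜
  have hub : ∀ c ⊆ 𝒜, IsChain (· ≤ ·) c → ∀ y ∈ c, ∃ ub ∈ 𝒜, ∀ z ∈ c, z ≤ ub := by
    intro c hc hchain y hy
    -- upper bound for the chain c
    set I : Ideal R := sSup c with hI
    obtain ⟨s, hs, J, hJfg, hJle, hkey⟩ := key_ideal S hS1 hSmul hSN hreg I
    -- J is finitely generated hence compact; it lies below some element of the chain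
    have hdir : DirectedOn (· ≤ ·) c := hchain.directedOn
    have hcompact := (Submodule.fg_iff_compact J).mp hJfg
    obtain ⟨k, hk, hJk⟩ :=
      (CompleteLattice.isCompactElement_iff_le_of_directed_sSup_le _ J).mp hcompact c ⟨y, hy⟩ hdir hJle
    obtain ⟨mk, hmk, hkann⟩ := hc hk
    refine ⟨k, hc hk, ?_⟩
    intro z hz
    intro r hr
    have hrI : r ∈ I := (le_sSup hz : z ≤ I) hr
    obtain ⟨j, hj, hjann⟩ := hkey r hrI
    have h1 : s * r - j ∈ ann mk := (mem_ann mk _).mpr (hjann mk)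
    have h2 : j ∈ ann mk := by rw [← hkann]; exact hJk hj
    have h3 : s * r ∈ ann mk := by
      have := add_mem h1 h2
      simpa using this
    have h4 : r ∈ ann mk := by
      rw [mem_ann] at h3 ⊢
      rw [mul_smul] at h3
      exact hreg s hs _ h3
    rwa [hkann]
  obtain ⟨P, -, ⟨m, hm, rfl⟩, hmax⟩ := zorn_le_nonempty₀ 𝒜 hub (ann x₀) hx𝒜
  refine ⟨m, hm, ?_⟩
  constructor
  · intro htop
    have : (1 : R) ∈ ann m := by
      show (1 : R) ∈ LinearMap.ker (LinearMap.toSpanSingleton R M m)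
      rw [htop]; trivial
    rw [mem_ann, one_smul] at this
    exact hm this
  · intro a b hab
    by_cases hb : b ∈ ann m
    · exact Or.inr hb
    · left
      have hbm : b • m ≠ 0 := fun h => hb ((mem_ann m b).mpr h)
      have hle : ann m ≤ ann (b • m) := by
        intro r hr
        rw [mem_ann] at hr ⊢
        rw [smul_comm, hr, smul_zero]
      have heq : ann (b • m) = ann m :=
        (hmax ⟨b • m, hbm, rfl⟩ hle).antisymm hle
      have : a ∈ ann (b • m) := by
        rw [mem_ann, smul_smul]
        exact (mem_ann m _).mp hab
      rwa [heq] at this
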